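/- (Secrecy of the Secure-Sum protocol.) Let m ≥ 2 and let G = ℝ/mℤ with its Haar probability measure. Let (R_{ij})_{i≠j, i,j∈{1,…,m}} be independent random variables each distributed according to the Haar (uniform) measure on G, and for inputs x ∈ G^m define S_i(x) = x_i + Σ_{j≠i} R_{ji} − Σ_{j≠i} R_{ij} ∈ G. Define the view of party 1 on input x as the random tuple View_1(x) = ( (R_{1j})_{j≠1}, (R_{j1})_{j≠1}, (S_1(x),…,S_m(x)) ). Then for any two input vectors x, x' ∈ G^m with x_1 = x'_1 and x_1 + ⋯ + x_m = x'_1 + ⋯ + x'_m in G, the random tuples View_1(x) and View_1(x') have the same distribution. Hence the distribution of party 1's view depends on the inputs only through x_1 and the sum s = Σ_i x_i. -/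

import Mathlib

open MeasureTheory ProbabilityTheory

private lemma joint_law_eq_pi {ι : Type*} [Fintype ι] {Ω : Type*} [MeasurableSpace Ω]
    (μ : Measure Ω) [IsProbabilityMeasure μ] {G : Type*} [MeasurableSpace G]
    (ν : Measure G) [IsProbabilityMeasure ν]
    (f : ι → Ω → G) (hmeas : ∀ i, Measurable (f i))
    (hindep : iIndepFun f μ)
    (hunif : ∀ i, Measure.map (f i) μ = ν) :
    Measure.map (fun ω i => f i ω) μ = Measure.pi (fun _ => ν) := by
  refine (Measure.pi_eq fun s hs => ?_).symm
  rw [Measure.map_apply (measurable_pi_lambda _ hmeas) (MeasurableSet.univ_pi hs)]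
  have hpre : (fun ω i => f i ω) ⁻¹' Set.univ.pi s = ⋂ i ∈ Finset.univ, f i ⁻¹' s i := by
    ext ω; simp [Set.mem_pi]
  rw [hpre, iIndepFun_iff_measure_inter_preimage_eq_mul.mp hindep Finset.univ (fun i _ => hs i)]
  exact Finset.prod_congr rfl fun i _ => by
    rw [← hunif i, Measure.map_apply (hmeas i) (hs i)]

theorem secure_sum_secrecy (m : ℕ) (hm : 2 ≤ m) [Fact ((0 : ℝ) < (m : ℝ))]
    {Ω : Type*} [MeasurableSpace Ω] (μ : Measure Ω) [IsProbabilityMeasure μ]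
    (R : {p : Fin m × Fin m // p.1 ≠ p.2} → Ω → AddCircle (m : ℝ))
    (hmeas : ∀ p, Measurable (R p))
    (hindep : iIndepFun R μ)
    (hunif : ∀ p, Measure.map (R p) μ = AddCircle.haarAddCircle)
    (S : (Fin m → AddCircle (m : ℝ)) → Ω → Fin m → AddCircle (m : ℝ))
    (hS : ∀ x ω i, S x ω i = x i +
      (∑ j ∈ Finset.univ.erase i, (if h : j ≠ i then R ⟨(j, i), h⟩ ω else 0)) -
      ∑ j ∈ Finset.univ.erase i, (if h : i ≠ j then R ⟨(i, j), h⟩ ω else 0))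
    (View₁ : (Fin m → AddCircle (m : ℝ)) → Ω →
      ({j : Fin m // j ≠ (⟨0, by omega⟩ : Fin m)} → AddCircle (m : ℝ)) ×
      ({j : Fin m // j ≠ (⟨0, by omega⟩ : Fin m)} → AddCircle (m : ℝ)) ×
      (Fin m → AddCircle (m : ℝ)))
    (hView : ∀ x ω, View₁ x ω =
      (fun j : {j : Fin m // j ≠ (⟨0, by omega⟩ : Fin m)} => R ⟨((⟨0, by omega⟩ : Fin m), j.1), Ne.symm j.2⟩ ω,
       fun j : {j : Fin m // j ≠ (⟨0, by omega⟩ : Fin m)} => R ⟨(j.1, (⟨0, by omega⟩ : Fin m)), j.2⟩ ω,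
       S x ω))
    (x x' : Fin m → AddCircle (m : ℝ)) (h1 : x ⟨0, by omega⟩ = x' ⟨0, by omega⟩)
    (hxx' : ∑ i, x i = ∑ i, x' i) :
    Measure.map (View₁ x) μ = Measure.map (View₁ x') μ := by
  classical
  have h2 : 0 < m := by omega
  have hm1 : 1 < m := by omega
  have hz01 : (⟨0, h2⟩ : Fin m) ≠ (⟨1, hm1⟩ : Fin m) := by simp [Fin.ext_iff]
  -- the difference vector
  set d : Fin m → AddCircle (m : ℝ) := fun k => x' k - x k with hd
  have hd0 : d ⟨0, h2⟩ = 0 := by simp [hd, h1]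
  have hdsum : ∑ k, d k = 0 := by simp [hd, Finset.sum_sub_distrib, hxx']
  -- the deterministic shift of the randomness
  set c : {p : Fin m × Fin m // p.1 ≠ p.2} → AddCircle (m : ℝ) :=
    fun p => if p.1.1 = (⟨1, hm1⟩ : Fin m) ∧ p.1.2 ≠ (⟨0, h2⟩ : Fin m) then d p.1.2 else 0 with hc
  -- the deterministic post-processing map
  set Φ : (Fin m → AddCircle (m : ℝ)) →
      ({p : Fin m × Fin m // p.1 ≠ p.2} → AddCircle (m : ℝ)) →
      ({j : Fin m // j ≠ (⟨0, h2⟩ : Fin m)} → AddCircle (m : ℝ)) ×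
      ({j : Fin m // j ≠ (⟨0, h2⟩ : Fin m)} → AddCircle (m : ℝ)) ×
      (Fin m → AddCircle (m : ℝ)) := fun y r =>
    (fun j => r ⟨((⟨0, h2⟩ : Fin m), j.1), Ne.symm j.2⟩,
     fun j => r ⟨(j.1, (⟨0, h2⟩ : Fin m)), j.2⟩,
     fun i => y i + (∑ j ∈ Finset.univ.erase i, (if h : j ≠ i then r ⟨(j, i), h⟩ else 0)) -
       ∑ j ∈ Finset.univ.erase i, (if h : i ≠ j then r ⟨(i, j), h⟩ else 0)) with hΦ
  have hΦmeas : ∀ y, Measurable (Φ y) := by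
    intro y
    refine Measurable.prod ?_ (Measurable.prod ?_ ?_)
    · exact measurable_pi_lambda _ fun j => measurable_pi_apply _
    · exact measurable_pi_lambda _ fun j => measurable_pi_apply _
    · refine measurable_pi_lambda _ fun i => ?_
      refine Measurable.sub (Measurable.const_add ?_ _) ?_
      · refine Finset.measurable_sum _ fun j _ => ?_
        rcases eq_or_ne j i with h | h
        · simp only [h, ne_eq, not_true_eq_false, dite_false]
          exact measurable_const
        · simp only [dif_pos h]
          exact measurable_pi_apply _
      · refine Finset.measurable_sum _ fun j _ => ?_
        rcases eq_or_ne i j with h | h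
        · simp only [h, ne_eq, not_true_eq_false, dite_false]
          exact measurable_const
        · simp only [dif_pos h]
          exact measurable_pi_apply _
  have hcomp : ∀ y ω, View₁ y ω = Φ y (fun p => R p ω) := by
    intro y ω
    rw [hView]
    refine Prod.ext rfl (Prod.ext rfl ?_)
    funext i
    exact hS y ω i
  -- the key algebraic identity
  have key : ∀ r, Φ x' r = Φ x (fun p => r p + c p) := by
    intro r
    refine Prod.ext ?_ (Prod.ext ?_ ?_)
    · funext j
      show r _ = r _ + c ⟨((⟨0, h2⟩ : Fin m), j.1), Ne.symm j.2⟩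
      have : c ⟨((⟨0, h2⟩ : Fin m), j.1), Ne.symm j.2⟩ = 0 := by
        simp only [hc]
        rw [if_neg]
        rintro ⟨h, -⟩
        exact hz01 h
      rw [this, add_zero]
    · funext j
      show r _ = r _ + c ⟨(j.1, (⟨0, h2⟩ : Fin m)), j.2⟩
      have : c ⟨(j.1, (⟨0, h2⟩ : Fin m)), j.2⟩ = 0 := by
        simp only [hc]
        rw [if_neg]
        rintro ⟨-, h⟩
        exact h rfl
      rw [this, add_zero]
    · funext i
      show x' i + _ - _ = x i + _ - _
      have hsplit : ∀ (P : Prop) [Decidable P] (a b : P → AddCircle (m : ℝ)),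
          (if h : P then a h + b h else 0) = (if h : P then a h else 0) + (if h : P then b h else 0) := by
        intro P _ a b
        split <;> simp
      simp only [hsplit, Finset.sum_add_distrib]
      have hCin : (∑ j ∈ Finset.univ.erase i, (if h : j ≠ i then c ⟨(j, i), h⟩ else 0)) =
          if i = (⟨0, h2⟩ : Fin m) ∨ i = (⟨1, hm1⟩ : Fin m) then 0 else d i := by
        rcases eq_or_ne i (⟨0, h2⟩ : Fin m) with hi0 | hi0
        · rw [if_pos (Or.inl hi0)]
          refine Finset.sum_eq_zero fun j hj => ?_
          rw [dif_pos (Finset.ne_of_mem_erase hj)]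
          simp only [hc]
          rw [if_neg]
          rintro ⟨-, h⟩
          exact h hi0
        rcases eq_or_ne i (⟨1, hm1⟩ : Fin m) with hi1 | hi1
        · rw [if_pos (Or.inr hi1)]
          refine Finset.sum_eq_zero fun j hj => ?_
          rw [dif_pos (Finset.ne_of_mem_erase hj)]
          simp only [hc]
          rw [if_neg]
          rintro ⟨h, -⟩
          exact Finset.ne_of_mem_erase hj (h.trans hi1.symm)
        · rw [if_neg (by tauto)]
          have hstep : ∀ j ∈ Finset.univ.erase i,
              (if h : j ≠ i then c ⟨(j, i), h⟩ else 0) =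
                if j = (⟨1, hm1⟩ : Fin m) then d i else 0 := by
            intro j hj
            rw [dif_pos (Finset.ne_of_mem_erase hj)]
            simp only [hc]
            by_cases hjz : j = (⟨1, hm1⟩ : Fin m)
            · rw [if_pos ⟨hjz, hi0⟩, if_pos hjz]
            · rw [if_neg (by tauto), if_neg hjz]
          rw [Finset.sum_congr rfl hstep, Finset.sum_ite_eq' _ (⟨1, hm1⟩ : Fin m) (fun _ => d i),
            if_pos (Finset.mem_erase.mpr ⟨hi1.symm, Finset.mem_univ _⟩)]
      have hCout : (∑ j ∈ Finset.univ.erase i, (if h : i ≠ j then c ⟨(i, j), h⟩ else 0)) =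
          if i = (⟨1, hm1⟩ : Fin m) then -d ⟨1, hm1⟩ else 0 := by
        rcases eq_or_ne i (⟨1, hm1⟩ : Fin m) with hi1 | hi1
        · rw [if_pos hi1]
          have hstep : ∀ j ∈ Finset.univ.erase i,
              (if h : i ≠ j then c ⟨(i, j), h⟩ else 0) = d j := by
            intro j hj
            rw [dif_pos (Finset.ne_of_mem_erase hj).symm]
            simp only [hc]
            by_cases hjz : j = (⟨0, h2⟩ : Fin m)
            · rw [if_neg (by tauto), hjz, hd0]
            · rw [if_pos ⟨hi1, hjz⟩]
          rw [Finset.sum_congr rfl hstep, hi1]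
          have h5 := Finset.add_sum_erase Finset.univ d (Finset.mem_univ (⟨1, hm1⟩ : Fin m))
          rw [hdsum] at h5
          linear_combination (norm := abel) h5
        · rw [if_neg hi1]
          refine Finset.sum_eq_zero fun j hj => ?_
          rw [dif_pos (Finset.ne_of_mem_erase hj).symm]
          simp only [hc]
          rw [if_neg (by tauto)]
      rw [hCin, hCout]
      rcases eq_or_ne i (⟨0, h2⟩ : Fin m) with hi0 | hi0
      · rw [if_pos (Or.inl hi0), if_neg (by rw [hi0]; exact hz01), hi0, h1]
        abel
      rcases eq_or_ne i (⟨1, hm1⟩ : Fin m) with hi1 | hi1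
      · rw [if_pos (Or.inr hi1), if_pos hi1, hi1]
        have h6 : x' (⟨1, hm1⟩ : Fin m) = x ⟨1, hm1⟩ + d ⟨1, hm1⟩ := by simp [hd]
        rw [h6]
        abel
      · rw [if_neg (by tauto), if_neg hi1]
        have h6 : x' i = x i + d i := by simp [hd]
        rw [h6]
        abel
  -- laws of the (shifted) randomness vector
  have hRvec : Measurable (fun ω (p : {p : Fin m × Fin m // p.1 ≠ p.2}) => R p ω) :=
    measurable_pi_lambda _ hmeas
  have hR'vec : Measurable (fun ω (p : {p : Fin m × Fin m // p.1 ≠ p.2}) => R p ω + c p) :=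
    measurable_pi_lambda _ fun p => (hmeas p).add_const _
  have law1 : Measure.map (fun ω (p : {p : Fin m × Fin m // p.1 ≠ p.2}) => R p ω) μ =
      Measure.pi (fun _ => AddCircle.haarAddCircle) :=
    joint_law_eq_pi μ _ R hmeas hindep hunif
  have law2 : Measure.map (fun ω (p : {p : Fin m × Fin m // p.1 ≠ p.2}) => R p ω + c p) μ =
      Measure.pi (fun _ => AddCircle.haarAddCircle) := by
    refine joint_law_eq_pi μ _ (fun p ω => R p ω + c p) (fun p => (hmeas p).add_const _) ?_ ?_
    · exact hindep.comp (fun p g => g + c p) (fun p => measurable_add_const _)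
    · intro p
      show Measure.map ((· + c p) ∘ R p) μ = AddCircle.haarAddCircle
      rw [← Measure.map_map (measurable_add_const _) (hmeas p), hunif p,
        map_add_right_eq_self _ _]
  have hV : View₁ x = Φ x ∘ (fun ω p => R p ω) := funext fun ω => hcomp x ω
  have hV' : View₁ x' = Φ x ∘ (fun ω p => R p ω + c p) :=
    funext fun ω => (hcomp x' ω).trans (key (fun p => R p ω))
  rw [hV, hV', ← Measure.map_map (hΦmeas x) hRvec, ← Measure.map_map (hΦmeas x) hR'vec,
    law1, law2]
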